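/- arXiv:2204.00509 — 5 statements merged into one kernel-verified Lean document; each statement's English description precedes it below -/
import Mathlib

section
/- For every natural number l, as h → 0 through nonzero complex values, (1/h³)·Γ(3h - 3l - 2) / (Γ(h - l)⁴ · Γ(l + 2 - h)) converges to (-1)^l · (l!)⁴ / (3 · (3l+2)! · (l+1)!). In particular the function h ↦ Γ(3h - 3l - 2) / (Γ(h - l)⁴ · Γ(l + 2 - h)) vanishes to order 3 at h = 0, i.e. dividing it by h² still gives a function tending to 0 as h → 0, h ≠ 0. -/
open Filter Topology

set_option maxHeartbeats 1000000

private lemma gamma_shift (n : ℕ) : ∀ (s : ℂ), (∀ j : ℕ, j ≤ n → s - j ≠ 0) →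
    Complex.Gamma (s - n) * ∏ j ∈ Finset.range (n + 1), (s - j) = Complex.Gamma (s + 1) := by
  induction n with
  | zero =>
    intro s hs
    have h0 : s ≠ 0 := by simpa using hs 0 le_rfl
    rw [Complex.Gamma_add_one s h0]
    simp [mul_comm]
  | succ n ih =>
    intro s hs
    have h1 : s - ((n : ℂ) + 1) ≠ 0 := by
      have := hs (n + 1) le_rfl
      push_cast at this
      exact this
    have key : Complex.Gamma (s - ((n : ℕ) + 1 : ℕ)) * (s - ((n : ℕ) + 1 : ℕ)) =
        Complex.Gamma (s - n) := by
      have := Complex.Gamma_add_one (s - ((n : ℂ) + 1)) h1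
      push_cast
      rw [mul_comm, ← this]
      ring_nf
    have hih := ih s (fun j hj => hs j (Nat.le_succ_of_le hj))
    rw [Finset.prod_range_succ, ← hih, ← key]
    ring

private lemma prod_neg_factorial (n : ℕ) :
    ∏ j ∈ Finset.range n, ((0 : ℂ) - ((j : ℂ) + 1)) = (-1) ^ n * n.factorial := by
  induction n with
  | zero => simp
  | succ n ih =>
    rw [Finset.prod_range_succ, ih, Nat.factorial_succ]
    push_cast
    ring

/-- For every `l : ℕ`, as `h → 0`, `h ≠ 0`, one has
`(1/h³)·Γ(3h - 3l - 2) / (Γ(h - l)⁴ · Γ(l + 2 - h)) → (-1)^l · (l!)⁴ / (3·(3l+2)!·(l+1)!)`;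
in particular the Gamma quotient divided by `h²` still tends to `0`. -/
theorem cubic_residue_vanishes_to_order_three (l : ℕ) :
    Tendsto
      (fun h : ℂ => (1 / h ^ 3) *
        (Complex.Gamma (3 * h - 3 * (l : ℂ) - 2) /
          (Complex.Gamma (h - (l : ℂ)) ^ 4 * Complex.Gamma ((l : ℂ) + 2 - h))))
      (𝓝[≠] (0 : ℂ))
      (𝓝 ((-1 : ℂ) ^ l * (Nat.factorial l : ℂ) ^ 4 /
        (3 * (Nat.factorial (3 * l + 2) : ℂ) * (Nat.factorial (l + 1) : ℂ)))) ∧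
    Tendsto
      (fun h : ℂ =>
        (Complex.Gamma (3 * h - 3 * (l : ℂ) - 2) /
          (Complex.Gamma (h - (l : ℂ)) ^ 4 * Complex.Gamma ((l : ℂ) + 2 - h))) / h ^ 2)
      (𝓝[≠] (0 : ℂ)) (𝓝 (0 : ℂ)) := by
  classical
  set Q1 : ℂ → ℂ := fun h => ∏ j ∈ Finset.range l, (h - ((j : ℂ) + 1)) with hQ1def
  set Q3 : ℂ → ℂ := fun h => ∏ j ∈ Finset.range (3 * l + 2), (3 * h - ((j : ℂ) + 1)) with hQ3def
  set G : ℂ → ℂ := fun h =>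
    Complex.Gamma (3 * h + 1) * (Q1 h) ^ 4 /
      (3 * Q3 h * Complex.Gamma (h + 1) ^ 4 * Complex.Gamma ((l : ℂ) + 2 - h)) with hGdef
  -- eventual equality
  have hev : ∀ᶠ h in (𝓝[≠] (0 : ℂ)), ‖h‖ < 1 / 3 ∧ h ≠ 0 := by
    filter_upwards [inter_mem_nhdsWithin {z : ℂ | z ≠ 0}
      (Metric.ball_mem_nhds (0 : ℂ) (by norm_num : (0:ℝ) < 1/3))] with h hh
    refine ⟨?_, hh.1⟩
    simpa [Metric.mem_ball, dist_eq_norm] using hh.2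
  have heq : ∀ h : ℂ, ‖h‖ < 1/3 → h ≠ 0 →
      (1 / h ^ 3) * (Complex.Gamma (3 * h - 3 * (l : ℂ) - 2) /
        (Complex.Gamma (h - (l : ℂ)) ^ 4 * Complex.Gamma ((l : ℂ) + 2 - h))) = G h := by
    intro h hlt hne
    have hjne : ∀ j : ℕ, j ≠ 0 → h - (j : ℂ) ≠ 0 := by
      intro j hj heq
      have : h = (j : ℂ) := by linear_combination heq
      rw [this] at hlt
      have : (1 : ℝ) ≤ (j : ℝ) := by exact_mod_cast Nat.one_le_iff_ne_zero.mpr hj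
      simp only [Complex.norm_natCast] at hlt
      linarith
    have h3jne : ∀ j : ℕ, j ≠ 0 → 3 * h - (j : ℂ) ≠ 0 := by
      intro j hj heq
      have : (3 : ℂ) * h = (j : ℂ) := by linear_combination heq
      have hn : ‖(3:ℂ) * h‖ = (j : ℝ) := by rw [this]; simp
      have : (1 : ℝ) ≤ (j : ℝ) := by exact_mod_cast Nat.one_le_iff_ne_zero.mpr hj
      rw [norm_mul] at hn
      simp only [Complex.norm_ofNat] at hn
      nlinarith [norm_nonneg h]
    have hfac1 : ∀ j : ℕ, j ≤ l → h - (j : ℂ) ≠ 0 := by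
      intro j _
      rcases Nat.eq_zero_or_pos j with rfl | hj
      · simpa using hne
      · exact hjne j hj.ne'
    have hfac3 : ∀ j : ℕ, j ≤ 3 * l + 2 → 3 * h - (j : ℂ) ≠ 0 := by
      intro j _
      rcases Nat.eq_zero_or_pos j with rfl | hj
      · simp only [Nat.cast_zero, sub_zero]
        exact mul_ne_zero (by norm_num : (3:ℂ) ≠ 0) hne
      · exact h3jne j hj.ne'
    have e1 : Complex.Gamma (h - (l : ℂ)) * (Q1 h * h) = Complex.Gamma (h + 1) := by
      have := gamma_shift l h hfac1
      rw [Finset.prod_range_succ' (fun j => h - (j : ℂ)) l] at this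
      simp only [Nat.cast_zero, sub_zero] at this
      rw [← this, hQ1def]
      push_cast
      ring
    have e3 : Complex.Gamma (3 * h - 3 * (l : ℂ) - 2) * (Q3 h * (3 * h)) =
        Complex.Gamma (3 * h + 1) := by
      have := gamma_shift (3 * l + 2) (3 * h) hfac3
      rw [Finset.prod_range_succ' (fun j => 3 * h - (j : ℂ)) (3 * l + 2)] at this
      simp only [Nat.cast_zero, sub_zero] at this
      have hcast : (3 * h : ℂ) - ((3 * l + 2 : ℕ) : ℂ) = 3 * h - 3 * (l : ℂ) - 2 := by
        push_cast; ring
      rw [hcast] at this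
      rw [← this, hQ3def]
      push_cast
      ring
    have hQ1ne : Q1 h ≠ 0 := by
      rw [hQ1def]
      refine Finset.prod_ne_zero_iff.mpr fun j hj => ?_
      have := hjne (j + 1) (Nat.succ_ne_zero j)
      push_cast at this ⊢
      exact this
    have hQ3ne : Q3 h ≠ 0 := by
      rw [hQ3def]
      refine Finset.prod_ne_zero_iff.mpr fun j hj => ?_
      have := h3jne (j + 1) (Nat.succ_ne_zero j)
      push_cast at this ⊢
      exact this
    have hG1ne : Complex.Gamma (h + 1) ≠ 0 := by
      refine Complex.Gamma_ne_zero fun m heq => ?_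
      have : h = -(m : ℂ) - 1 := by linear_combination heq
      rw [this] at hlt
      have h1 : ‖-(m : ℂ) - 1‖ ≥ 1 := by
        have : ‖-(m : ℂ) - 1‖ = ‖(m : ℂ) + 1‖ := by rw [← norm_neg]; ring_nf
        rw [this]
        have : ((m : ℂ) + 1) = ((m + 1 : ℕ) : ℂ) := by push_cast; ring
        rw [this, Complex.norm_natCast]
        exact_mod_cast Nat.one_le_iff_ne_zero.mpr (Nat.succ_ne_zero m)
      linarith
    have hG2ne : Complex.Gamma ((l : ℂ) + 2 - h) ≠ 0 := by
      refine Complex.Gamma_ne_zero fun m heq => ?_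
      have : h = (l : ℂ) + 2 + (m : ℂ) := by linear_combination -heq
      rw [this] at hlt
      have h1 : ‖(l : ℂ) + 2 + (m : ℂ)‖ ≥ 2 := by
        have : ((l : ℂ) + 2 + (m : ℂ)) = ((l + 2 + m : ℕ) : ℂ) := by push_cast; ring
        rw [this, Complex.norm_natCast]
        exact_mod_cast by omega
      linarith
    -- rewrite Gammas
    have ee1 : Complex.Gamma (h - (l : ℂ)) = Complex.Gamma (h + 1) / (Q1 h * h) :=
      (eq_div_iff (mul_ne_zero hQ1ne hne)).mpr e1
    have ee3 : Complex.Gamma (3 * h - 3 * (l : ℂ) - 2) =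
        Complex.Gamma (3 * h + 1) / (Q3 h * (3 * h)) :=
      (eq_div_iff (mul_ne_zero hQ3ne (mul_ne_zero (by norm_num) hne))).mpr e3
    have hD : h ^ 3 * (Q3 h * (3 * h) * (Complex.Gamma (h + 1) ^ 4 *
        Complex.Gamma ((l : ℂ) + 2 - h))) ≠ 0 := by
      apply mul_ne_zero (pow_ne_zero _ hne)
      apply mul_ne_zero (mul_ne_zero hQ3ne (mul_ne_zero (by norm_num : (3:ℂ) ≠ 0) hne))
      exact mul_ne_zero (pow_ne_zero _ hG1ne) hG2ne
    rw [ee1, ee3, hGdef]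
    field_simp [hne, hQ1ne, hQ3ne, hG1ne, hG2ne]
  -- continuity of G at 0
  have cG1 : ContinuousAt (fun h : ℂ => Complex.Gamma (3 * h + 1)) 0 := by
    have hg : ContinuousAt Complex.Gamma 1 := by
      refine (Complex.differentiableAt_Gamma 1 fun m heq => ?_).continuousAt
      have := congrArg Complex.re heq
      simp at this
      nlinarith [Nat.cast_nonneg (α := ℝ) m, this]
    have hc : ContinuousAt Complex.Gamma ((fun h : ℂ => 3 * h + 1) 0) := by
      simpa using hg
    exact ContinuousAt.comp hc (by fun_prop)
  have cG2 : ContinuousAt (fun h : ℂ => Complex.Gamma (h + 1)) 0 := by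
    have hg : ContinuousAt Complex.Gamma 1 := by
      refine (Complex.differentiableAt_Gamma 1 fun m heq => ?_).continuousAt
      have := congrArg Complex.re heq
      simp at this
      nlinarith [Nat.cast_nonneg (α := ℝ) m, this]
    have hc : ContinuousAt Complex.Gamma ((fun h : ℂ => h + 1) 0) := by
      simpa using hg
    exact ContinuousAt.comp hc (by fun_prop)
  have cG3 : ContinuousAt (fun h : ℂ => Complex.Gamma ((l : ℂ) + 2 - h)) 0 := by
    have hg : ContinuousAt Complex.Gamma ((l : ℂ) + 2) := by
      refine (Complex.differentiableAt_Gamma _ fun m heq => ?_).continuousAt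
      have := congrArg Complex.re heq
      simp at this
      nlinarith [Nat.cast_nonneg (α := ℝ) m, Nat.cast_nonneg (α := ℝ) l, this]
    have hc : ContinuousAt Complex.Gamma ((fun h : ℂ => (l : ℂ) + 2 - h) 0) := by
      simpa using hg
    exact ContinuousAt.comp hc (by fun_prop)
  have cQ1 : Continuous Q1 := by
    rw [hQ1def]; exact continuous_finset_prod _ fun j _ => by fun_prop
  have cQ3 : Continuous Q3 := by
    rw [hQ3def]; exact continuous_finset_prod _ fun j _ => by fun_prop
  -- value at 0
  have hQ10 : Q1 0 = (-1) ^ l * l.factorial := by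
    rw [hQ1def]; simpa using prod_neg_factorial l
  have hQ30 : Q3 0 = (-1) ^ (3 * l + 2) * (3 * l + 2).factorial := by
    rw [hQ3def]
    have := prod_neg_factorial (3 * l + 2)
    simpa using this
  have hGam20 : Complex.Gamma ((l : ℂ) + 2 - 0) = ((l + 1).factorial : ℂ) := by
    have := Complex.Gamma_nat_eq_factorial (l + 1)
    push_cast at this ⊢
    rw [show (l : ℂ) + 2 - 0 = (l : ℂ) + 1 + 1 by ring, this]
  have hden0 : (3 : ℂ) * Q3 0 * Complex.Gamma (0 + 1) ^ 4 * Complex.Gamma ((l : ℂ) + 2 - 0) ≠ 0 := by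
    have hf1 : ((Nat.factorial (3 * l + 2) : ℕ) : ℂ) ≠ 0 := by
      exact_mod_cast (Nat.factorial_pos (3 * l + 2)).ne'
    have hf2 : ((Nat.factorial (l + 1) : ℕ) : ℂ) ≠ 0 := by
      exact_mod_cast (Nat.factorial_pos (l + 1)).ne'
    have hs : ((-1 : ℂ)) ^ (3 * l + 2) ≠ 0 := pow_ne_zero _ (by norm_num)
    rw [hQ30, hGam20, show ((0:ℂ) + 1) = 1 by ring, Complex.Gamma_one]
    apply mul_ne_zero
    apply mul_ne_zero
    apply mul_ne_zero
    · norm_num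
    · exact mul_ne_zero hs hf1
    · norm_num
    · exact hf2
  have cG : ContinuousAt G 0 := by
    rw [hGdef]
    exact (cG1.mul ((cQ1.continuousAt).pow 4)).div
      ((((continuousAt_const.mul cQ3.continuousAt)).mul (cG2.pow 4)).mul cG3) hden0
  have hG0 : G 0 = ((-1 : ℂ) ^ l * (Nat.factorial l : ℂ) ^ 4 /
      (3 * (Nat.factorial (3 * l + 2) : ℂ) * (Nat.factorial (l + 1) : ℂ))) := by
    rw [hGdef]
    simp only
    rw [hQ10, hQ30, hGam20]
    have h30 : Complex.Gamma (3 * (0:ℂ) + 1) = 1 := by norm_num [Complex.Gamma_one]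
    have h10 : Complex.Gamma ((0:ℂ) + 1) = 1 := by norm_num [Complex.Gamma_one]
    rw [h30, h10]
    have hf1 : ((Nat.factorial (3 * l + 2) : ℕ) : ℂ) ≠ 0 := by
      exact_mod_cast (Nat.factorial_pos (3 * l + 2)).ne'
    have hf2 : ((Nat.factorial (l + 1) : ℕ) : ℂ) ≠ 0 := by
      exact_mod_cast (Nat.factorial_pos (l + 1)).ne'

    rcases Nat.even_or_odd l with he | ho
    · have h1 : ((-1 : ℂ)) ^ l = 1 := he.neg_one_pow
      have h2 : ((-1 : ℂ)) ^ (3 * l + 2) = 1 := by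
        refine Even.neg_one_pow ?_
        rcases he with ⟨k, hk⟩
        exact ⟨3 * k + 1, by omega⟩
      rw [h1, h2]
      field_simp
      try ring
    · have h1 : ((-1 : ℂ)) ^ l = -1 := ho.neg_one_pow
      have h2 : ((-1 : ℂ)) ^ (3 * l + 2) = -1 := by
        refine Odd.neg_one_pow ?_
        rcases ho with ⟨k, hk⟩
        exact ⟨3 * k + 2, by omega⟩
      rw [h1, h2]
      field_simp
      try ring
  have part1 : Tendsto
      (fun h : ℂ => (1 / h ^ 3) *
        (Complex.Gamma (3 * h - 3 * (l : ℂ) - 2) /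
          (Complex.Gamma (h - (l : ℂ)) ^ 4 * Complex.Gamma ((l : ℂ) + 2 - h))))
      (𝓝[≠] (0 : ℂ))
      (𝓝 ((-1 : ℂ) ^ l * (Nat.factorial l : ℂ) ^ 4 /
        (3 * (Nat.factorial (3 * l + 2) : ℂ) * (Nat.factorial (l + 1) : ℂ)))) := by
    rw [← hG0]
    refine Tendsto.congr' ?_ (cG.tendsto.mono_left nhdsWithin_le_nhds)
    filter_upwards [hev] with h hh
    exact (heq h hh.1 hh.2).symm
  refine ⟨part1, ?_⟩
  have hzero : Tendsto (fun h : ℂ => h) (𝓝[≠] (0 : ℂ)) (𝓝 0) :=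
    tendsto_id.mono_right nhdsWithin_le_nhds
  have := hzero.mul part1
  rw [zero_mul] at this
  refine Tendsto.congr' ?_ this
  filter_upwards [self_mem_nhdsWithin] with h hh
  have hne : h ≠ 0 := hh
  have k : h * h⁻¹ = 1 := mul_inv_cancel₀ hne
  field_simp
end

section
/- Let N ≥ 1 be an integer, let w₁, …, w_N and d be positive integers, set d' = (w₁ + ⋯ + w_N) - d, and assume d' ≥ 1. Let l be a natural number. Then, as h → 0 through nonzero complex values, (1/h^(N-1)) · Γ(1 + d·h - d(l+1)) / ( Γ(1 + d'(l+1) - d'·h) · ∏_{i=1}^N Γ(1 + wᵢ·h - wᵢ(l+1)) ) converges to [ (-1)^(d(l+1)-1) / ( d · (d(l+1)-1)! · (d'(l+1))! ) ] · ∏_{i=1}^N (-1)^(wᵢ(l+1)-1) · wᵢ · (wᵢ(l+1)-1)!. In particular, dividing the same expression by h^(N-2) gives a function tending to 0 as h → 0, h ≠ 0. -/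
open Filter Topology


open Finset

lemma myGamma_eq_div (k : ℕ) (z : ℂ) (hz : ∀ i : ℕ, i < k → z + i ≠ 0) :
    Complex.Gamma z = Complex.Gamma (z + k) / ∏ i ∈ Finset.range k, (z + i) := by
  induction k with
  | zero => simp
  | succ k ih =>
    have hz' : ∀ i : ℕ, i < k → z + i ≠ 0 := fun i hi => hz i (by omega)
    have h1 : z + k ≠ 0 := hz k (by omega)
    rw [ih hz', Finset.prod_range_succ,
        show (z + ((k:ℕ)+1:ℕ) : ℂ) = (z + k) + 1 by push_cast; ring,
        Complex.Gamma_add_one _ h1]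
    rw [mul_comm ((z:ℂ) + k) _, mul_div_mul_right _ _ h1]

lemma myprod_neg (j : ℕ) :
    ∏ i ∈ Finset.range j, ((i : ℂ) - j) = (-1) ^ j * (Nat.factorial j : ℂ) := by
  have hnat : ∏ i ∈ Finset.range j, (j - i) = Nat.factorial j := by
    calc ∏ i ∈ Finset.range j, (j - i)
        = ∏ i ∈ Finset.range j, ((fun i => i + 1) (j - 1 - i)) := by
          refine Finset.prod_congr rfl fun i hi => ?_
          have := Finset.mem_range.mp hi; simp only; omega
      _ = ∏ i ∈ Finset.range j, (i + 1) := Finset.prod_range_reflect _ j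
      _ = Nat.factorial j := Finset.prod_range_add_one_eq_factorial j
  calc ∏ i ∈ Finset.range j, ((i : ℂ) - j)
      = ∏ i ∈ Finset.range j, (-1 * ((j - i : ℕ) : ℂ)) := by
        refine Finset.prod_congr rfl fun i hi => ?_
        have hij := Finset.mem_range.mp hi
        rw [Nat.cast_sub hij.le]; ring
    _ = (-1) ^ j * ((∏ i ∈ Finset.range j, (j - i) : ℕ) : ℂ) := by
        rw [Finset.prod_mul_distrib, Finset.prod_const, Finset.card_range, Nat.cast_prod]
    _ = (-1) ^ j * (Nat.factorial j : ℂ) := by rw [hnat]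

lemma myGamma_pole (m k : ℕ) (hm : 0 < m) (hk : 1 ≤ k) :
    Tendsto (fun h : ℂ => h * Complex.Gamma (1 + (m : ℂ) * h - (k : ℂ)))
      (𝓝[≠] (0 : ℂ))
      (𝓝 ((-1 : ℂ) ^ (k - 1) / ((m : ℂ) * (Nat.factorial (k - 1) : ℂ)))) := by
  obtain ⟨j, rfl⟩ : ∃ j, k = j + 1 := ⟨k - 1, by omega⟩
  simp only [Nat.add_sub_cancel]
  have hm0 : (m : ℂ) ≠ 0 := Nat.cast_ne_zero.mpr hm.ne'
  have hfac : (Nat.factorial j : ℂ) ≠ 0 := Nat.cast_ne_zero.mpr (Nat.factorial_pos j).ne'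
  set g : ℂ → ℂ := fun h =>
    Complex.Gamma ((m : ℂ) * h + 1) /
      ((m : ℂ) * ∏ i ∈ Finset.range j, ((m : ℂ) * h + (i : ℂ) - j)) with hg
  -- limit of g
  have hnum : Tendsto (fun h : ℂ => Complex.Gamma ((m : ℂ) * h + 1)) (𝓝 0) (𝓝 1) := by
    have hc : ContinuousAt Complex.Gamma 1 := by
      refine (Complex.differentiableAt_Gamma 1 fun n hn => ?_).continuousAt
      have := congrArg Complex.re hn
      simp at this
      nlinarith [Nat.cast_nonneg (α := ℝ) n]
    have hlin : Tendsto (fun h : ℂ => (m : ℂ) * h + 1) (𝓝 0) (𝓝 1) := by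
      have hcl : Continuous (fun h : ℂ => (m : ℂ) * h + 1) := by continuity
      simpa using hcl.tendsto 0
    simpa [Complex.Gamma_one, Function.comp_def] using hc.tendsto.comp hlin
  have hden : Tendsto
      (fun h : ℂ => (m : ℂ) * ∏ i ∈ Finset.range j, ((m : ℂ) * h + (i : ℂ) - j)) (𝓝 0)
      (𝓝 ((m : ℂ) * ((-1) ^ j * (Nat.factorial j : ℂ)))) := by
    have hc : Continuous (fun h : ℂ => (m : ℂ) * ∏ i ∈ Finset.range j, ((m : ℂ) * h + (i : ℂ) - j)) := by
      continuity
    have := hc.tendsto 0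
    simpa [myprod_neg j] using this
  have hdne : (m : ℂ) * ((-1) ^ j * (Nat.factorial j : ℂ)) ≠ 0 :=
    mul_ne_zero hm0 (mul_ne_zero (pow_ne_zero _ (by norm_num)) hfac)
  have hglim : Tendsto g (𝓝[≠] (0 : ℂ)) (𝓝 ((-1 : ℂ) ^ j / ((m : ℂ) * (Nat.factorial j : ℂ)))) := by
    have hT := (hnum.div hden hdne).mono_left (nhdsWithin_le_nhds (s := {(0:ℂ)}ᶜ))
    have heqL : (1 : ℂ) / ((m : ℂ) * ((-1) ^ j * (Nat.factorial j : ℂ)))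
        = (-1 : ℂ) ^ j / ((m : ℂ) * (Nat.factorial j : ℂ)) := by
      rw [div_eq_div_iff hdne (mul_ne_zero hm0 hfac)]
      have h1 : ((-1 : ℂ) ^ j) * ((-1 : ℂ) ^ j) = 1 := by
        rw [← mul_pow]; norm_num
      linear_combination (-((m:ℂ) * (Nat.factorial j : ℂ))) * h1
    rw [← heqL]
    exact hT
  -- eventual equality
  have hev : (fun h : ℂ => h * Complex.Gamma (1 + (m : ℂ) * h - (((j : ℕ) + 1 : ℕ) : ℂ)))
      =ᶠ[𝓝[≠] (0 : ℂ)] g := by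
    have hsmall : ∀ᶠ h : ℂ in 𝓝[≠] (0 : ℂ), ‖(m : ℂ) * h‖ < 1 := by
      have hT : Tendsto (fun h : ℂ => ‖(m : ℂ) * h‖) (𝓝[≠] 0) (𝓝 0) := by
        have hc : Continuous (fun h : ℂ => ‖(m : ℂ) * h‖) := by continuity
        have := (hc.tendsto 0).mono_left (nhdsWithin_le_nhds (s := {(0:ℂ)}ᶜ))
        simpa using this
      exact hT.eventually_lt_const (by norm_num)
    filter_upwards [hsmall, self_mem_nhdsWithin] with h hs hh'
    have hh : h ≠ 0 := hh'
    have ha0 : (m : ℂ) * h ≠ 0 := mul_ne_zero hm0 hh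
    have hz : ∀ i : ℕ, i < j + 1 → (1 + (m : ℂ) * h - (((j : ℕ) + 1 : ℕ) : ℂ)) + i ≠ 0 := by
      intro i hi heq
      push_cast at heq
      rcases Nat.lt_or_ge i j with hij | hij
      · set t := j - i with ht
        have hkt : (j : ℂ) = (i : ℂ) + t := by
          have hjt : j = i + t := by omega
          exact_mod_cast hjt
        have hmt : (m : ℂ) * h = (t : ℂ) := by linear_combination heq + hkt
        have hnorm : ‖(m : ℂ) * h‖ = (t : ℝ) := by rw [hmt]; simp
        rw [hnorm] at hs
        have h1t : 1 ≤ t := by omega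
        have : (1 : ℝ) ≤ t := by exact_mod_cast h1t
        linarith
      · have hij' : i = j := by omega
        subst hij'
        exact ha0 (by linear_combination heq)
    rw [myGamma_eq_div (j + 1) _ hz]
    rw [show (1 + (m : ℂ) * h - (((j : ℕ) + 1 : ℕ) : ℂ)) + (((j : ℕ) + 1 : ℕ) : ℂ)
        = (m : ℂ) * h + 1 by push_cast; ring]
    rw [Finset.prod_range_succ]
    have hterm : ∀ i ∈ Finset.range j,
        (1 + (m : ℂ) * h - (((j : ℕ) + 1 : ℕ) : ℂ)) + (i : ℂ) = (m : ℂ) * h + (i : ℂ) - j := by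
      intro i _; push_cast; ring
    rw [Finset.prod_congr rfl hterm,
        show (1 + (m : ℂ) * h - (((j : ℕ) + 1 : ℕ) : ℂ)) + ((j : ℕ) : ℂ) = (m : ℂ) * h by
          push_cast; ring]
    rw [hg]
    simp only [div_eq_mul_inv, mul_inv]
    calc h * (Complex.Gamma ((m:ℂ)*h+1) *
          ((∏ i ∈ Finset.range j, ((m:ℂ)*h + i - j))⁻¹ * ((m:ℂ)⁻¹ * h⁻¹)))
        = Complex.Gamma ((m:ℂ)*h+1) *
          ((m:ℂ)⁻¹ * (∏ i ∈ Finset.range j, ((m:ℂ)*h + i - j))⁻¹) * (h * h⁻¹) := by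
          ring
      _ = Complex.Gamma ((m:ℂ)*h+1) *
          ((m:ℂ)⁻¹ * (∏ i ∈ Finset.range j, ((m:ℂ)*h + i - j))⁻¹) := by
          rw [mul_inv_cancel₀ hh, mul_one]
  exact hglim.congr' (Filter.EventuallyEq.symm hev)


private lemma my_inv_div (a : ℕ) (c : ℂ) : ((-1 : ℂ) ^ a / c)⁻¹ = (-1 : ℂ) ^ a * c := by
  rw [inv_div, div_eq_mul_inv, ← inv_pow]
  norm_num [mul_comm]


/-- Let `N ≥ 1`, let `w₁,…,w_N`, `d` be positive integers, `d' = Σ wᵢ - d ≥ 1`,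
and `l : ℕ`. Then as `h → 0`, `h ≠ 0`,
`(1/h^(N-1)) · Γ(1 + d·h - d(l+1)) / (Γ(1 + d'(l+1) - d'·h) · ∏ᵢ Γ(1 + wᵢ·h - wᵢ(l+1)))`
tends to `[(-1)^(d(l+1)-1)/(d·(d(l+1)-1)!·(d'(l+1))!)] · ∏ᵢ (-1)^(wᵢ(l+1)-1)·wᵢ·(wᵢ(l+1)-1)!`;
in particular the same expression divided by `h^(N-2)` tends to `0`. -/

theorem weighted_residue_vanishes_to_order_N_minus_one
    (N : ℕ) (hN : 1 ≤ N) (w : Fin N → ℕ) (hw : ∀ i, 0 < w i)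
    (d : ℕ) (hd : 0 < d) (d' : ℕ) (hd' : 1 ≤ d') (hsum : d' + d = ∑ i, w i) (l : ℕ) :
    Tendsto
      (fun h : ℂ => (1 / h ^ ((N : ℤ) - 1)) *
        (Complex.Gamma (1 + (d : ℂ) * h - (d : ℂ) * ((l : ℂ) + 1)) /
          (Complex.Gamma (1 + (d' : ℂ) * ((l : ℂ) + 1) - (d' : ℂ) * h) *
            ∏ i, Complex.Gamma (1 + (w i : ℂ) * h - (w i : ℂ) * ((l : ℂ) + 1)))))
      (𝓝[≠] (0 : ℂ))
      (𝓝 (((-1 : ℂ) ^ (d * (l + 1) - 1) /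
          ((d : ℂ) * (Nat.factorial (d * (l + 1) - 1) : ℂ) *
            (Nat.factorial (d' * (l + 1)) : ℂ))) *
        ∏ i, (-1 : ℂ) ^ (w i * (l + 1) - 1) * (w i : ℂ) *
          (Nat.factorial (w i * (l + 1) - 1) : ℂ))) ∧
    Tendsto
      (fun h : ℂ =>
        (Complex.Gamma (1 + (d : ℂ) * h - (d : ℂ) * ((l : ℂ) + 1)) /
          (Complex.Gamma (1 + (d' : ℂ) * ((l : ℂ) + 1) - (d' : ℂ) * h) *
            ∏ i, Complex.Gamma (1 + (w i : ℂ) * h - (w i : ℂ) * ((l : ℂ) + 1)))) /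
          h ^ ((N : ℤ) - 2))
      (𝓝[≠] (0 : ℂ)) (𝓝 (0 : ℂ)) := by
  have castd : ∀ m : ℕ, ((m * (l + 1) : ℕ) : ℂ) = (m : ℂ) * ((l : ℂ) + 1) := by
    intro m; push_cast; ring
  have honele : ∀ m : ℕ, 0 < m → 1 ≤ m * (l + 1) := fun m hm => Nat.mul_pos hm l.succ_pos
  -- limits of the pieces
  have hA : Tendsto (fun h : ℂ => h * Complex.Gamma (1 + (d : ℂ) * h - (d : ℂ) * ((l : ℂ) + 1)))
      (𝓝[≠] (0 : ℂ))
      (𝓝 ((-1 : ℂ) ^ (d * (l + 1) - 1) /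
        ((d : ℂ) * (Nat.factorial (d * (l + 1) - 1) : ℂ)))) := by
    have := myGamma_pole d (d * (l + 1)) hd (honele d hd)
    rw [castd d] at this
    exact this
  have hfacB : ((Nat.factorial (d' * (l + 1)) : ℕ) : ℂ) ≠ 0 :=
    Nat.cast_ne_zero.mpr (Nat.factorial_pos _).ne'
  have hB : Tendsto (fun h : ℂ => Complex.Gamma (1 + (d' : ℂ) * ((l : ℂ) + 1) - (d' : ℂ) * h))
      (𝓝[≠] (0 : ℂ)) (𝓝 ((Nat.factorial (d' * (l + 1)) : ℂ))) := by
    set c : ℂ := 1 + (d' : ℂ) * ((l : ℂ) + 1) with hc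
    have hcval : c = ((d' * (l + 1) : ℕ) : ℂ) + 1 := by rw [hc, castd d']; ring
    have hcont : ContinuousAt Complex.Gamma c := by
      refine (Complex.differentiableAt_Gamma c fun n hn => ?_).continuousAt
      rw [hcval] at hn
      have h2 := congrArg Complex.re hn
      simp at h2
      nlinarith [Nat.cast_nonneg (α := ℝ) n, Nat.cast_nonneg (α := ℝ) (d' * (l + 1))]
    have hlin : Tendsto (fun h : ℂ => 1 + (d' : ℂ) * ((l : ℂ) + 1) - (d' : ℂ) * h) (𝓝 0) (𝓝 c) := by
      have hcl : Continuous (fun h : ℂ => 1 + (d' : ℂ) * ((l : ℂ) + 1) - (d' : ℂ) * h) := by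
        continuity
      simpa [hc] using hcl.tendsto 0
    have := (hcont.tendsto.comp hlin).mono_left (nhdsWithin_le_nhds (s := {(0:ℂ)}ᶜ))
    rw [hcval, Complex.Gamma_nat_eq_factorial] at this
    exact this
  set L : Fin N → ℂ := fun i => (-1 : ℂ) ^ (w i * (l + 1) - 1) /
      ((w i : ℂ) * (Nat.factorial (w i * (l + 1) - 1) : ℂ)) with hL
  have hLne : ∀ i, L i ≠ 0 := by
    intro i
    exact div_ne_zero (pow_ne_zero _ (by norm_num))
      (mul_ne_zero (Nat.cast_ne_zero.mpr (hw i).ne')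
        (Nat.cast_ne_zero.mpr (Nat.factorial_pos _).ne'))
  have hC : ∀ i : Fin N,
      Tendsto (fun h : ℂ =>
          (h * Complex.Gamma (1 + (w i : ℂ) * h - (w i : ℂ) * ((l : ℂ) + 1)))⁻¹)
        (𝓝[≠] (0 : ℂ)) (𝓝 ((L i)⁻¹)) := by
    intro i
    have := myGamma_pole (w i) (w i * (l + 1)) (hw i) (honele (w i) (hw i))
    rw [castd (w i)] at this
    exact this.inv₀ (hLne i)
  have hProd : Tendsto (fun h : ℂ => ∏ i,
        (h * Complex.Gamma (1 + (w i : ℂ) * h - (w i : ℂ) * ((l : ℂ) + 1)))⁻¹)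
      (𝓝[≠] (0 : ℂ)) (𝓝 (∏ i, (L i)⁻¹)) :=
    tendsto_finset_prod _ fun i _ => hC i
  have hMain := (hA.div hB hfacB).mul hProd
  -- identify the limit constant
  have hconst : ((-1 : ℂ) ^ (d * (l + 1) - 1) /
        ((d : ℂ) * (Nat.factorial (d * (l + 1) - 1) : ℂ)) /
        (Nat.factorial (d' * (l + 1)) : ℂ)) * ∏ i, (L i)⁻¹
      = ((-1 : ℂ) ^ (d * (l + 1) - 1) /
          ((d : ℂ) * (Nat.factorial (d * (l + 1) - 1) : ℂ) *
            (Nat.factorial (d' * (l + 1)) : ℂ))) *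
        ∏ i, (-1 : ℂ) ^ (w i * (l + 1) - 1) * (w i : ℂ) *
          (Nat.factorial (w i * (l + 1) - 1) : ℂ) := by
    rw [div_div]
    congr 1
    refine Finset.prod_congr rfl fun i _ => ?_
    rw [hL]
    simp only
    rw [my_inv_div]
    ring
  rw [hconst] at hMain
  obtain ⟨M, rfl⟩ : ∃ M, N = M + 1 := ⟨N - 1, by omega⟩
  have hzp1 : ∀ h : ℂ, h ^ (((M + 1 : ℕ) : ℤ) - 1) = h ^ M := by
    intro h
    rw [show (((M + 1 : ℕ) : ℤ) - 1) = ((M : ℕ) : ℤ) by push_cast; ring, zpow_natCast]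
  -- first part
  have T1 : Tendsto
      (fun h : ℂ => (1 / h ^ (((M + 1 : ℕ) : ℤ) - 1)) *
        (Complex.Gamma (1 + (d : ℂ) * h - (d : ℂ) * ((l : ℂ) + 1)) /
          (Complex.Gamma (1 + (d' : ℂ) * ((l : ℂ) + 1) - (d' : ℂ) * h) *
            ∏ i, Complex.Gamma (1 + (w i : ℂ) * h - (w i : ℂ) * ((l : ℂ) + 1)))))
      (𝓝[≠] (0 : ℂ))
      (𝓝 (((-1 : ℂ) ^ (d * (l + 1) - 1) /
          ((d : ℂ) * (Nat.factorial (d * (l + 1) - 1) : ℂ) *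
            (Nat.factorial (d' * (l + 1)) : ℂ))) *
        ∏ i, (-1 : ℂ) ^ (w i * (l + 1) - 1) * (w i : ℂ) *
          (Nat.factorial (w i * (l + 1) - 1) : ℂ))) := by
    refine hMain.congr' ?_
    filter_upwards [self_mem_nhdsWithin] with h hh'
    have hh : h ≠ 0 := hh'
    set A := Complex.Gamma (1 + (d : ℂ) * h - (d : ℂ) * ((l : ℂ) + 1)) with hAdef
    set B := Complex.Gamma (1 + (d' : ℂ) * ((l : ℂ) + 1) - (d' : ℂ) * h) with hBdef
    set C : Fin (M + 1) → ℂ :=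
      fun i => Complex.Gamma (1 + (w i : ℂ) * h - (w i : ℂ) * ((l : ℂ) + 1)) with hCdef
    show (h * A / B) * ∏ i, (h * C i)⁻¹ = (1 / h ^ (((M + 1 : ℕ) : ℤ) - 1)) * (A / (B * ∏ i, C i))
    rw [hzp1 h]
    simp only [mul_inv]
    rw [Finset.prod_mul_distrib, Finset.prod_const, Finset.card_univ, Fintype.card_fin]
    rw [one_div, div_eq_mul_inv, div_eq_mul_inv, mul_inv B, ← Finset.prod_inv_distrib]
    rw [pow_succ, inv_pow]
    calc h * A * B⁻¹ * (((h ^ M)⁻¹ * h⁻¹) * ∏ i, (C i)⁻¹)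
        = ((h ^ M)⁻¹ * (A * (B⁻¹ * ∏ i, (C i)⁻¹))) * (h * h⁻¹) := by ring
      _ = (h ^ M)⁻¹ * (A * (B⁻¹ * ∏ i, (C i)⁻¹)) := by rw [mul_inv_cancel₀ hh, mul_one]
  refine ⟨T1, ?_⟩
  -- second part
  have hid : Tendsto (fun h : ℂ => h) (𝓝[≠] (0 : ℂ)) (𝓝 0) :=
    tendsto_id.mono_left (nhdsWithin_le_nhds (s := {(0:ℂ)}ᶜ))
  have T2 := T1.mul hid
  rw [mul_zero] at T2
  refine T2.congr' ?_
  filter_upwards [self_mem_nhdsWithin] with h hh'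
  have hh : h ≠ 0 := hh'
  set E := Complex.Gamma (1 + (d : ℂ) * h - (d : ℂ) * ((l : ℂ) + 1)) /
      (Complex.Gamma (1 + (d' : ℂ) * ((l : ℂ) + 1) - (d' : ℂ) * h) *
        ∏ i, Complex.Gamma (1 + (w i : ℂ) * h - (w i : ℂ) * ((l : ℂ) + 1))) with hE
  show (1 / h ^ (((M + 1 : ℕ) : ℤ) - 1)) * E * h = E / h ^ (((M + 1 : ℕ) : ℤ) - 2)
  have hsplit : h ^ (((M + 1 : ℕ) : ℤ) - 1) = h ^ (((M + 1 : ℕ) : ℤ) - 2) * h := by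
    rw [show (((M + 1 : ℕ) : ℤ) - 1) = (((M + 1 : ℕ) : ℤ) - 2) + 1 by ring,
        zpow_add_one₀ hh]
  rw [hsplit, one_div, mul_inv, div_eq_mul_inv]
  calc (h ^ (((M + 1 : ℕ) : ℤ) - 2))⁻¹ * h⁻¹ * E * h
      = E * (h ^ (((M + 1 : ℕ) : ℤ) - 2))⁻¹ * (h * h⁻¹) := by ring
    _ = E * (h ^ (((M + 1 : ℕ) : ℤ) - 2))⁻¹ := by rw [mul_inv_cancel₀ hh, mul_one]
end

section
/- In the Laurent polynomial ring in three variables over ℚ (the monoid algebra of ℤ³), let f = x + y + z + (xyz)^{-1}, i.e. f is the sum of the monomials with exponent vectors (1,0,0), (0,1,0), (0,0,1) and (-1,-1,-1). Then for every natural number n, the constant term (the coefficient of the zero exponent vector) of f^n equals (4d)!/(d!)⁴ if n = 4d for some natural number d, and equals 0 if n is not divisible by 4. -/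
/-- The Laurent polynomial `f = x + y + z + (xyz)⁻¹` in the Laurent polynomial ring in three
variables over `ℚ`, i.e. the monoid algebra of `ℤ³` over `ℚ`. -/
noncomputable def mirrorP3 : AddMonoidAlgebra ℚ (Fin 3 → ℤ) :=
  AddMonoidAlgebra.single ![1, 0, 0] 1 + AddMonoidAlgebra.single ![0, 1, 0] 1 +
    AddMonoidAlgebra.single ![0, 0, 1] 1 + AddMonoidAlgebra.single ![-1, -1, -1] 1

/-- The four exponent vectors of `mirrorP3`. -/
noncomputable def vP3 : Fin 4 → (Fin 3 → ℤ) :=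
  ![![1, 0, 0], ![0, 1, 0], ![0, 0, 1], ![-1, -1, -1]]

lemma mirrorP3_eq_sum : mirrorP3 = ∑ i : Fin 4, AddMonoidAlgebra.single (vP3 i) (1 : ℚ) := by
  simp [mirrorP3, vP3, Fin.sum_univ_four]

lemma smul_sum_vP3 (k : Fin 4 → ℕ) :
    (∑ i : Fin 4, k i • vP3 i) = 0 ↔ k 0 = k 3 ∧ k 1 = k 3 ∧ k 2 = k 3 := by
  have h : (∑ i : Fin 4, k i • vP3 i)
      = ![(k 0 : ℤ) - k 3, (k 1 : ℤ) - k 3, (k 2 : ℤ) - k 3] := by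
    funext j
    fin_cases j <;>
      · simp [vP3, Fin.sum_univ_four, nsmul_eq_mul]
        ring
  rw [h]
  constructor
  · intro hh
    have h0 := congrFun hh 0
    have h1 := congrFun hh 1
    have h2 := congrFun hh 2
    simp at h0 h1 h2
    omega
  · rintro ⟨h0, h1, h2⟩
    funext j; fin_cases j <;> simp <;> omega

lemma constant_term_pow (n : ℕ) :
    (mirrorP3 ^ n).coeff 0 = ∑ k ∈ Finset.piAntidiag Finset.univ n,
      if (∑ i : Fin 4, k i • vP3 i) = 0 then (Nat.multinomial Finset.univ k : ℚ) else 0 := by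
  rw [mirrorP3_eq_sum, Finset.sum_pow_eq_sum_piAntidiag, AddMonoidAlgebra.coeff_sum,
    Finsupp.finset_sum_apply]
  refine Finset.sum_congr rfl fun k _ => ?_
  simp_rw [AddMonoidAlgebra.single_pow, one_pow, AddMonoidAlgebra.prod_single,
    Finset.prod_const_one, AddMonoidAlgebra.natCast_def, AddMonoidAlgebra.single_mul_single,
    zero_add, mul_one, AddMonoidAlgebra.coeff_single]
  rw [Finsupp.single_apply]

/-- The constant term of `f^n`, where `f = x + y + z + (xyz)⁻¹`, equals
`(4d)!/(d!)⁴` if `n = 4d`, and equals `0` if `4 ∤ n`. -/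
theorem constant_term_powers_mirrorP3 (n : ℕ) :
    (∀ d : ℕ, n = 4 * d →
      (mirrorP3 ^ n).coeff 0 = (Nat.factorial (4 * d) : ℚ) / (Nat.factorial d : ℚ) ^ 4) ∧
    (¬ (4 ∣ n) → (mirrorP3 ^ n).coeff 0 = 0) := by
  constructor
  · rintro d rfl
    rw [constant_term_pow]
    rw [Finset.sum_eq_single_of_mem (fun _ : Fin 4 => d)]
    · rw [if_pos ((smul_sum_vP3 (fun _ => d)).2 ⟨rfl, rfl, rfl⟩)]
      have hspec := Nat.multinomial_spec (Finset.univ : Finset (Fin 4)) (fun _ => d)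
      simp only [Finset.prod_const, Finset.sum_const, Finset.card_univ, Fintype.card_fin,
        smul_eq_mul] at hspec
      rw [eq_div_iff (by positivity)]
      have := congrArg (fun m : ℕ => (m : ℚ)) hspec
      push_cast at this
      linarith [this]
    · simp [Finset.mem_piAntidiag]
      try omega
    · intro k hk hne
      rw [if_neg]
      intro hcond
      obtain ⟨h0, h1, h2⟩ := (smul_sum_vP3 k).1 hcond
      simp only [Finset.mem_piAntidiag, Fin.sum_univ_four] at hk
      apply hne
      funext i
      fin_cases i <;> simp <;> omega
  · intro hnd
    rw [constant_term_pow]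
    refine Finset.sum_eq_zero fun k hk => ?_
    rw [if_neg]
    intro hcond
    obtain ⟨h0, h1, h2⟩ := (smul_sum_vP3 k).1 hcond
    simp only [Finset.mem_piAntidiag, Fin.sum_univ_four] at hk
    exact hnd ⟨k 3, by omega⟩
end

section
/- For every h ∈ ℂ and every q ∈ ℂ with |q| < 1/27, the family indexed by d ∈ ℕ with terms q^d · Γ(1 + 3h + 3d) · (Γ(1 + h + d))^{-4} · (Γ(1 - h - d))^{-1} is summable (i.e., the series Σ_{d≥0} q^d Γ(1+3h+3d)/(Γ(1+h+d)⁴ Γ(1-h-d)) converges absolutely). -/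
open Filter Topology

private lemma ratio_aux (q p A B C z1 z2 z3 w v : ℂ)
    (hB : B ≠ 0) (hC : C ≠ 0) (hw : w ≠ 0) (hv : v ≠ 0) :
    p * q * (z1 * z2 * z3 * A) / ((w * B) ^ 4 * (C / v)) =
      q * (z1 * z2 * (z3 * v)) / w ^ 4 * (p * A / (B ^ 4 * C)) := by
  field_simp

set_option maxHeartbeats 2000000 in
/-- For every `h : ℂ` and `q : ℂ` with `|q| < 1/27`, the series
`Σ_{d≥0} q^d Γ(1+3h+3d) / (Γ(1+h+d)⁴ Γ(1-h-d))` converges absolutely. -/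
theorem summable_local_I_function_KS (h q : ℂ) (hq : ‖q‖ < 1 / 27) :
    Summable (fun d : ℕ =>
      q ^ d * Complex.Gamma (1 + 3 * h + 3 * (d : ℂ)) /
        (Complex.Gamma (1 + h + (d : ℂ)) ^ 4 * Complex.Gamma (1 - h - (d : ℂ)))) := by
  set f : ℕ → ℂ := fun d : ℕ =>
      q ^ d * Complex.Gamma (1 + 3 * h + 3 * (d : ℂ)) /
        (Complex.Gamma (1 + h + (d : ℂ)) ^ 4 * Complex.Gamma (1 - h - (d : ℂ))) with hf
  by_cases hq0 : q = 0
  · subst hq0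
    apply summable_of_ne_finset_zero (s := {0})
    intro d hd
    simp only [Finset.mem_singleton] at hd
    simp only [hf, zero_pow hd, zero_mul, zero_div]
  by_cases hZ : ∃ n : ℤ, h = (n : ℂ)
  · -- if h is an integer, all but finitely many terms vanish
    obtain ⟨n, rfl⟩ := hZ
    apply summable_of_ne_finset_zero (s := Finset.range (1 - n).toNat)
    intro d hd
    rw [Finset.mem_range, not_lt] at hd
    have hd' : (1 : ℤ) - n ≤ (d : ℤ) := le_trans (Int.self_le_toNat _) (by exact_mod_cast hd)
    have hm : ((n + d - 1).toNat : ℤ) = n + d - 1 := Int.toNat_of_nonneg (by omega)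
    have h2 : (((n + d - 1).toNat : ℕ) : ℂ) = (n : ℂ) + d - 1 := by
      have := congrArg (fun z : ℤ => (z : ℂ)) hm
      push_cast at this
      exact this
    have h3 : (1 : ℂ) - (n : ℂ) - (d : ℂ) = -(((n + d - 1).toNat : ℕ) : ℂ) := by
      rw [h2]; ring
    simp only [hf, h3, Complex.Gamma_neg_nat_eq_zero, mul_zero, div_zero]
  -- main case: ratio test
  push_neg at hZ
  -- the eventual good properties
  have hgood : ∀ᶠ d : ℕ in atTop, (|h.re| + 2 : ℝ) ≤ (d : ℝ) :=
    tendsto_natCast_atTop_atTop.eventually_ge_atTop _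
  have nz : ∀ z : ℂ, 0 < z.re → z ≠ 0 := fun z hz h0 => by simp [h0] at hz
  -- the ratio function
  set r : ℕ → ℂ := fun d =>
    q * ((1 + 3*h + 3*(d:ℂ)) * (2 + 3*h + 3*(d:ℂ)) * ((3 + 3*h + 3*(d:ℂ)) * (-(h + (d:ℂ)))))
      / (1 + h + (d:ℂ))^4 with hr
  have key : ∀ d : ℕ, (|h.re| + 2 : ℝ) ≤ (d : ℝ) → f (d+1) = r d * f d ∧ f d ≠ 0 := by
    intro d hd
    have habs1 : -|h.re| ≤ h.re := neg_abs_le _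
    have habs2 : h.re ≤ |h.re| := le_abs_self _
    have z1 : (1 + 3*h + 3*(d:ℂ)) ≠ 0 := by
      apply nz; simp [Complex.add_re, Complex.mul_re]; linarith
    have z2 : (2 + 3*h + 3*(d:ℂ)) ≠ 0 := by
      apply nz; simp [Complex.add_re, Complex.mul_re]; linarith
    have z3 : (3 + 3*h + 3*(d:ℂ)) ≠ 0 := by
      apply nz; simp [Complex.add_re, Complex.mul_re]; linarith
    have w0 : (1 + h + (d:ℂ)) ≠ 0 := by
      apply nz; simp [Complex.add_re]; linarith
    have v0 : (-(h + (d:ℂ))) ≠ 0 := by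
      intro h0
      have : h + (d:ℂ) = 0 := by linear_combination -h0
      have : (h + (d:ℂ)).re = 0 := by rw [this]; simp
      simp [Complex.add_re] at this
      linarith
    have gA : Complex.Gamma (1 + 3*h + 3*(d:ℂ)) ≠ 0 := by
      apply Complex.Gamma_ne_zero_of_re_pos
      simp [Complex.add_re, Complex.mul_re]; linarith
    have gB : Complex.Gamma (1 + h + (d:ℂ)) ≠ 0 := by
      apply Complex.Gamma_ne_zero_of_re_pos
      simp [Complex.add_re]; linarith
    have gC : ∀ e : ℕ, Complex.Gamma (1 - h - (e:ℂ)) ≠ 0 := by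
      intro e
      apply Complex.Gamma_ne_zero
      intro m hm'
      apply hZ (1 - e + m)
      have : h = 1 - (e:ℂ) + m := by linear_combination -hm'
      rw [this]; push_cast; ring
    -- Gamma recurrences
    have G1 : Complex.Gamma (1 + 3*h + 3*((d:ℂ)+1)) =
        (1 + 3*h + 3*(d:ℂ)) * (2 + 3*h + 3*(d:ℂ)) * (3 + 3*h + 3*(d:ℂ))
          * Complex.Gamma (1 + 3*h + 3*(d:ℂ)) := by
      rw [show (1:ℂ) + 3*h + 3*((d:ℂ)+1) = (3 + 3*h + 3*(d:ℂ)) + 1 by ring,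
        Complex.Gamma_add_one _ z3,
        show (3:ℂ) + 3*h + 3*(d:ℂ) = (2 + 3*h + 3*(d:ℂ)) + 1 by ring,
        Complex.Gamma_add_one _ z2,
        show (2:ℂ) + 3*h + 3*(d:ℂ) = (1 + 3*h + 3*(d:ℂ)) + 1 by ring,
        Complex.Gamma_add_one _ z1]
      ring
    have G2 : Complex.Gamma (1 + h + ((d:ℂ)+1)) =
        (1 + h + (d:ℂ)) * Complex.Gamma (1 + h + (d:ℂ)) := by
      rw [show (1:ℂ) + h + ((d:ℂ)+1) = (1 + h + (d:ℂ)) + 1 by ring,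
        Complex.Gamma_add_one _ w0]
    have G3 : Complex.Gamma (1 - h - ((d:ℂ)+1)) =
        Complex.Gamma (1 - h - (d:ℂ)) / (-(h + (d:ℂ))) := by
      have t := Complex.Gamma_add_one (-(h + (d:ℂ))) v0
      rw [show -(h + (d:ℂ)) + 1 = 1 - h - (d:ℂ) by ring] at t
      rw [show (1:ℂ) - h - ((d:ℂ)+1) = -(h + (d:ℂ)) by ring]
      rw [t]
      exact (mul_div_cancel_left₀ _ v0).symm
    have hfd : f d ≠ 0 :=
      div_ne_zero (mul_ne_zero (pow_ne_zero _ hq0) gA)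
        (mul_ne_zero (pow_ne_zero _ gB) (gC d))
    refine ⟨?_, hfd⟩
    have hcast : ((d + 1 : ℕ) : ℂ) = (d : ℂ) + 1 := by push_cast; ring
    simp only [hf, hr, hcast, G1, G2, G3]
    rw [pow_succ]
    exact ratio_aux q (q^d) (Complex.Gamma (1 + 3*h + 3*(d:ℂ)))
      (Complex.Gamma (1 + h + (d:ℂ))) (Complex.Gamma (1 - h - (d:ℂ)))
      (1 + 3*h + 3*(d:ℂ)) (2 + 3*h + 3*(d:ℂ)) (3 + 3*h + 3*(d:ℂ))
      (1 + h + (d:ℂ)) (-(h + (d:ℂ))) gB (gC d) w0 v0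
  -- the limit of the ratio
  have hu : Tendsto (fun d : ℕ => ((d:ℂ))⁻¹) atTop (𝓝 0) := by
    rw [tendsto_zero_iff_norm_tendsto_zero]
    exact (tendsto_inv_atTop_zero.comp tendsto_natCast_atTop_atTop).congr (fun d => by simp)
  have l1 : Tendsto (fun d : ℕ => (1+3*h) * ((d:ℂ))⁻¹ + 3) atTop (𝓝 3) := by
    simpa using (hu.const_mul (1+3*h)).add_const (3:ℂ)
  have l2 : Tendsto (fun d : ℕ => (2+3*h) * ((d:ℂ))⁻¹ + 3) atTop (𝓝 3) := by
    simpa using (hu.const_mul (2+3*h)).add_const (3:ℂ)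
  have l3 : Tendsto (fun d : ℕ => (3+3*h) * ((d:ℂ))⁻¹ + 3) atTop (𝓝 3) := by
    simpa using (hu.const_mul (3+3*h)).add_const (3:ℂ)
  have l4 : Tendsto (fun d : ℕ => -(h * ((d:ℂ))⁻¹ + 1)) atTop (𝓝 (-1)) := by
    simpa using ((hu.const_mul h).add_const (1:ℂ)).neg
  have l5 : Tendsto (fun d : ℕ => ((1+h) * ((d:ℂ))⁻¹ + 1)^4) atTop (𝓝 1) := by
    simpa using ((hu.const_mul (1+h)).add_const (1:ℂ)).pow 4
  have hS : Tendsto r atTop (𝓝 (-27 * q)) := by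
    have comb := ((tendsto_const_nhds (x := q) (f := atTop)).mul
      ((l1.mul l2).mul (l3.mul l4))).div l5 one_ne_zero
    have hlim : q * (3 * 3 * (3 * (-1))) / 1 = -27 * q := by ring
    rw [hlim] at comb
    apply comb.congr'
    filter_upwards [hgood] with d hd
    have hdne : d ≠ 0 := by
      rintro rfl
      simp only [Nat.cast_zero] at hd
      have := abs_nonneg h.re
      linarith
    have hd0 : (d:ℂ) ≠ 0 := Nat.cast_ne_zero.mpr hdne
    have habs1 : -|h.re| ≤ h.re := neg_abs_le _
    have w0 : (1 + h + (d:ℂ)) ≠ 0 := by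
      apply nz; simp [Complex.add_re]; linarith
    have w0' : ((1+h) * (d:ℂ)⁻¹ + 1) ≠ 0 := by
      rw [show (1+h)*(d:ℂ)⁻¹+1 = (1+h+(d:ℂ)) * (d:ℂ)⁻¹ from by field_simp]
      exact mul_ne_zero w0 (inv_ne_zero hd0)
    simp only [hr, Pi.div_apply]
    field_simp
  -- conclude via the ratio test
  have hnorm : Tendsto (fun d => ‖r d‖) atTop (𝓝 (27 * ‖q‖)) := by
    have := hS.norm
    have h27 : ‖(-27 : ℂ) * q‖ = 27 * ‖q‖ := by
      rw [norm_mul]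
      simp
    rwa [h27] at this
  apply summable_of_ratio_test_tendsto_lt_one (l := 27 * ‖q‖) (by linarith)
  · filter_upwards [hgood] with d hd
    exact (key d hd).2
  · apply hnorm.congr'
    filter_upwards [hgood] with d hd
    obtain ⟨heq, hne⟩ := key d hd
    rw [heq, norm_mul, mul_div_assoc, div_self (norm_ne_zero_iff.mpr hne), mul_one]
end

section
/- Let h ∈ ℂ satisfy e^{-2πih} ≠ e^{2πik/3} for k = 0, 1, 2, and let t ∈ ℂ with |t| < 3. Then Σ_{m=1}^∞ (-1)^m · ( e^{2πim/3} / (e^{-2πih} - e^{2πim/3}) ) · t^m / ( Γ(m) · Γ(1 - m/3)⁴ · Γ(1 + m/3) ) = Σ_{k=1}^{2} ( (-1)^k · e^{2πik/3} / ( (e^{-2πih} - e^{2πik/3}) · Γ(1 - k/3)⁴ ) ) · Σ_{l=0}^∞ (-1)^l · t^{k+3l} · Γ(k/3 + l)⁴ / ( Γ(k/3)⁴ · Γ(k + 3l) · Γ(1 + k/3 + l) ), where all series converge absolutely and the terms on the left with m divisible by 3 vanish because 1/Γ(1 - m/3) = 0 for such m. -/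
open Complex

lemma S8.gammaC_ne (r : ℝ) (hr : 0 < r) : Complex.Gamma (r:ℂ) ≠ 0 := by
  rw [Complex.Gamma_ofReal]
  exact_mod_cast (Real.Gamma_pos_of_pos hr).ne'

lemma S8.gamma_shift (x : ℂ) (hx : ∀ n : ℕ, x + n ≠ 0) (l : ℕ) :
    Complex.Gamma (1 - x - l) * Complex.Gamma (x + l) =
      (-1)^l * (Complex.Gamma (1 - x) * Complex.Gamma x) := by
  induction l with
  | zero => simp
  | succ l ih =>
      have h1 : x + (l:ℂ) ≠ 0 := hx l
      have h2 : -x - (l:ℂ) ≠ 0 := fun h => h1 (by linear_combination -h)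
      push_cast
      rw [show x + ((l:ℂ)+1) = (x + l) + 1 by ring, Complex.Gamma_add_one _ h1]
      have e2 : Complex.Gamma (1 - x - (l:ℂ)) = (-x - l) * Complex.Gamma (1 - x - ((l:ℂ)+1)) := by
        rw [show (1 - x - (l:ℂ)) = (-x - l) + 1 by ring, Complex.Gamma_add_one _ h2,
          show (-x - (l:ℂ)) = 1 - x - ((l:ℂ)+1) by ring]
      apply mul_left_cancel₀ h2
      have hcl : (-x - (l:ℂ)) * Complex.Gamma (1 - x - ((l:ℂ)+1)) = Complex.Gamma (1 - x - (l:ℂ)) := e2.symm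
      calc (-x-(l:ℂ)) * (Complex.Gamma (1-x-((l:ℂ)+1)) * ((x+l) * Complex.Gamma (x+l)))
          = (x+l) * (((-x-(l:ℂ)) * Complex.Gamma (1-x-((l:ℂ)+1))) * Complex.Gamma (x+l)) := by ring
        _ = (x+l) * (Complex.Gamma (1-x-(l:ℂ)) * Complex.Gamma (x+l)) := by rw [hcl]
        _ = (x+l) * ((-1)^l * (Complex.Gamma (1-x) * Complex.Gamma x)) := by
              rw [show Complex.Gamma (1-x-(l:ℂ)) * Complex.Gamma (x+l)
                  = (-1:ℂ)^l * (Complex.Gamma (1-x) * Complex.Gamma x) from by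
                exact_mod_cast ih]
        _ = (-x-(l:ℂ)) * ((-1)^(l+1) * (Complex.Gamma (1-x) * Complex.Gamma x)) := by ring

noncomputable def S8F (h t : ℂ) (m : ℕ) : ℂ :=
  (-1 : ℂ) ^ (m + 1) *
    (Complex.exp (2 * (Real.pi : ℂ) * Complex.I * ((m : ℂ) + 1) / 3) /
      (Complex.exp (-(2 * (Real.pi : ℂ) * Complex.I * h)) -
        Complex.exp (2 * (Real.pi : ℂ) * Complex.I * ((m : ℂ) + 1) / 3))) *
    t ^ (m + 1) /
    (Complex.Gamma ((m : ℂ) + 1) * Complex.Gamma (1 - ((m : ℂ) + 1) / 3) ^ 4 *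
      Complex.Gamma (1 + ((m : ℂ) + 1) / 3))

noncomputable def S8c (h : ℂ) (k : ℕ) : ℂ :=
  (-1 : ℂ) ^ k * Complex.exp (2 * (Real.pi : ℂ) * Complex.I * (k : ℂ) / 3) /
    ((Complex.exp (-(2 * (Real.pi : ℂ) * Complex.I * h)) -
        Complex.exp (2 * (Real.pi : ℂ) * Complex.I * (k : ℂ) / 3)) *
      Complex.Gamma (1 - (k : ℂ) / 3) ^ 4)

noncomputable def S8g (t : ℂ) (k l : ℕ) : ℂ :=
  (-1 : ℂ) ^ l * t ^ (k + 3 * l) * Complex.Gamma ((k : ℂ) / 3 + (l : ℂ)) ^ 4 /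
    (Complex.Gamma ((k : ℂ) / 3) ^ 4 * Complex.Gamma ((k : ℂ) + 3 * (l : ℂ)) *
      Complex.Gamma (1 + (k : ℂ) / 3 + (l : ℂ)))

lemma S8F_zero (h t : ℂ) (m : ℕ) (hm : m % 3 = 2) : S8F h t m = 0 := by
  obtain ⟨j, rfl⟩ : ∃ j, m = 3*j + 2 := ⟨m / 3, by omega⟩
  have hc : (1 : ℂ) - (((3*j+2 : ℕ) : ℂ) + 1)/3 = -(j : ℂ) := by push_cast; ring
  rw [S8F, hc, Complex.Gamma_neg_nat_eq_zero]
  simp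

lemma S8_termwise (h t : ℂ) (k l : ℕ) (hk : k = 1 ∨ k = 2)
    (hA : Complex.exp (-(2 * (Real.pi : ℂ) * Complex.I * h)) ≠
        Complex.exp (2 * (Real.pi : ℂ) * Complex.I * (k : ℂ) / 3)) :
    S8F h t (3*l + (k-1)) = S8c h k * S8g t k l := by
  have hk1 : 1 ≤ k := by omega
  have hm1 : (3*l + (k-1)) + 1 = k + 3*l := by omega
  have hmc : ((3*l + (k-1) : ℕ) : ℂ) + 1 = (k : ℂ) + 3*(l : ℂ) := by
    rw [show ((3*l+(k-1):ℕ):ℂ) + 1 = (((3*l+(k-1))+1 : ℕ):ℂ) by push_cast; ring, hm1]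
    push_cast; ring
  have hkr : (1:ℝ) ≤ (k:ℝ) ∧ (k:ℝ) ≤ 2 := by
    rcases hk with rfl | rfl <;> norm_num
  have hl : (0:ℝ) ≤ (l:ℝ) := Nat.cast_nonneg l
  -- exp periodicity
  have hexp1 : Complex.exp ((l:ℂ) * (2 * (Real.pi:ℂ) * Complex.I)) = 1 := by
    have := Complex.exp_int_mul_two_pi_mul_I (l : ℤ)
    push_cast at this
    exact this
  have hE : Complex.exp (2 * (Real.pi:ℂ) * Complex.I * ((k:ℂ) + 3*(l:ℂ)) / 3) =
      Complex.exp (2 * (Real.pi:ℂ) * Complex.I * (k:ℂ) / 3) := by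
    rw [show 2 * (Real.pi:ℂ) * Complex.I * ((k:ℂ) + 3*(l:ℂ)) / 3
        = 2 * (Real.pi:ℂ) * Complex.I * (k:ℂ) / 3 + (l:ℂ) * (2 * (Real.pi:ℂ) * Complex.I) by
      ring, Complex.exp_add, hexp1, mul_one]
  -- nonvanishing gammas
  have hgen : ∀ r : ℝ, 0 < r → Complex.Gamma (r:ℂ) ≠ 0 := S8.gammaC_ne
  have ha : Complex.Gamma ((k:ℂ)/3 + l) ≠ 0 := by
    rw [show ((k:ℂ)/3 + l) = (((k:ℝ)/3 + l : ℝ):ℂ) by push_cast; ring]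
    exact hgen _ (by linarith [hkr.1])
  have hc : Complex.Gamma ((k:ℂ)/3) ≠ 0 := by
    rw [show ((k:ℂ)/3) = (((k:ℝ)/3 : ℝ):ℂ) by push_cast; ring]
    exact hgen _ (by linarith [hkr.1])
  have hd : Complex.Gamma (1 - (k:ℂ)/3) ≠ 0 := by
    rw [show (1 - (k:ℂ)/3) = ((1 - (k:ℝ)/3 : ℝ):ℂ) by push_cast; ring]
    exact hgen _ (by linarith [hkr.2])
  have hG1 : Complex.Gamma ((k:ℂ) + 3*(l:ℂ)) ≠ 0 := by
    rw [show ((k:ℂ) + 3*(l:ℂ)) = (((k:ℝ) + 3*l : ℝ):ℂ) by push_cast; ring]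
    exact hgen _ (by linarith [hkr.1])
  have hG2 : Complex.Gamma (1 + (k:ℂ)/3 + l) ≠ 0 := by
    rw [show (1 + (k:ℂ)/3 + l) = ((1 + (k:ℝ)/3 + l : ℝ):ℂ) by push_cast; ring]
    exact hgen _ (by linarith [hkr.1])
  have hABne : Complex.exp (-(2 * (Real.pi : ℂ) * Complex.I * h)) -
      Complex.exp (2 * (Real.pi : ℂ) * Complex.I * (k : ℂ) / 3) ≠ 0 := sub_ne_zero.mpr hA
  -- reflection-type identity
  have hx : ∀ n : ℕ, (k:ℂ)/3 + n ≠ 0 := by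
    intro n
    rw [show ((k:ℂ)/3 + n) = (((k:ℝ)/3 + n : ℝ):ℂ) by push_cast; ring]
    have hn : (0:ℝ) ≤ (n:ℝ) := Nat.cast_nonneg n
    exact Complex.ofReal_ne_zero.mpr (by have := hkr.1; positivity)
  have key := S8.gamma_shift ((k:ℂ)/3) hx l
  have hb : Complex.Gamma (1 - (k:ℂ)/3 - l) ≠ 0 := by
    intro hb0
    have : ((-1:ℂ)^l * (Complex.Gamma (1 - (k:ℂ)/3) * Complex.Gamma ((k:ℂ)/3))) ≠ 0 := by
      exact mul_ne_zero (pow_ne_zero _ (by norm_num)) (mul_ne_zero hd hc)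
    exact this (by rw [← key, hb0, zero_mul])
  have h14 : ((-1:ℂ)^l)^4 = 1 := by
    rw [← pow_mul, mul_comm, pow_mul]; norm_num
  have key4 : Complex.Gamma (1 - (k:ℂ)/3 - l)^4 * Complex.Gamma ((k:ℂ)/3 + l)^4
      = Complex.Gamma (1 - (k:ℂ)/3)^4 * Complex.Gamma ((k:ℂ)/3)^4 := by
    have h4 := congrArg (· ^ 4) key
    simp only [mul_pow] at h4
    rw [h4, h14, one_mul]
  have hb4 : Complex.Gamma (1 - (k:ℂ)/3 - l)^4
      = Complex.Gamma (1 - (k:ℂ)/3)^4 * Complex.Gamma ((k:ℂ)/3)^4 / Complex.Gamma ((k:ℂ)/3 + l)^4 := by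
    rw [eq_div_iff (pow_ne_zero 4 ha)]
    linear_combination key4
  -- now unfold and rewrite
  rw [S8F, S8c, S8g, hm1, hmc, hE,
    show (1 - ((k:ℂ) + 3*(l:ℂ))/3) = 1 - (k:ℂ)/3 - l by ring,
    show (1 + ((k:ℂ) + 3*(l:ℂ))/3) = 1 + (k:ℂ)/3 + l by ring,
    show ((-1:ℂ))^(k + 3*l) = (-1:ℂ)^k * (-1:ℂ)^l by
      rw [pow_add, pow_mul]; norm_num,
    hb4]
  field_simp

lemma S8g_norm (t : ℂ) (k l : ℕ) (hk : 1 ≤ k) :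
    ‖S8g t k l‖ = ‖t‖^(k+3*l) *
      (Real.Gamma ((k:ℝ)/3 + l)^4 /
        (Real.Gamma ((k:ℝ)/3)^4 * Real.Gamma ((k:ℝ)+3*l) * Real.Gamma (1+(k:ℝ)/3+l))) := by
  have hk' : (1:ℝ) ≤ (k:ℝ) := by exact_mod_cast hk
  have hl : (0:ℝ) ≤ (l:ℝ) := Nat.cast_nonneg l
  have p1 : (0:ℝ) < (k:ℝ)/3 + l := by linarith
  have p2 : (0:ℝ) < (k:ℝ)/3 := by linarith
  have p3 : (0:ℝ) < (k:ℝ) + 3*l := by linarith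
  have p4 : (0:ℝ) < 1 + (k:ℝ)/3 + l := by linarith
  rw [S8g,
    show (1 + (k:ℂ)/3 + (l:ℂ)) = ((1+(k:ℝ)/3+l : ℝ) : ℂ) by push_cast; ring,
    show ((k:ℂ)/3 + (l:ℂ)) = (((k:ℝ)/3 + l : ℝ) : ℂ) by push_cast; ring,
    show ((k:ℂ) + 3*(l:ℂ)) = (((k:ℝ)+3*l : ℝ) : ℂ) by push_cast; ring,
    show ((k:ℂ)/3) = (((k:ℝ)/3 : ℝ) : ℂ) by push_cast; ring,
    Complex.Gamma_ofReal, Complex.Gamma_ofReal, Complex.Gamma_ofReal, Complex.Gamma_ofReal]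
  simp only [norm_div, norm_mul, norm_pow, norm_neg, norm_one, one_pow, one_mul,
    Complex.norm_real, Real.norm_eq_abs]
  rw [abs_of_pos (Real.Gamma_pos_of_pos p1), abs_of_pos (Real.Gamma_pos_of_pos p2),
    abs_of_pos (Real.Gamma_pos_of_pos p3), abs_of_pos (Real.Gamma_pos_of_pos p4)]
  ring

lemma S8g_summable (t : ℂ) (ht : ‖t‖ < 3) (k : ℕ) (hk : 1 ≤ k) :
    Summable (S8g t k) := by
  have hk' : (1:ℝ) ≤ (k:ℝ) := by exact_mod_cast hk
  have habs : (0:ℝ) ≤ ‖t‖ := norm_nonneg t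
  apply summable_of_ratio_norm_eventually_le (r := ‖t‖^3/27)
  · have : ‖t‖^3 < 3^3 := by
      exact pow_lt_pow_left₀ ht habs (by norm_num)
    norm_num at this ⊢
    linarith
  · filter_upwards with l
    have hl : (0:ℝ) ≤ (l:ℝ) := Nat.cast_nonneg l
    set u : ℝ := (k:ℝ)/3 + l with hu
    have hu0 : 0 < u := by rw [hu]; linarith
    have p2 : (0:ℝ) < (k:ℝ)/3 := by linarith
    have C2 : (0:ℝ) < Real.Gamma ((k:ℝ)/3)^4 := by positivity
    have G3u : (0:ℝ) < Real.Gamma ((k:ℝ)+3*l) := Real.Gamma_pos_of_pos (by linarith)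
    have Gu1 : (0:ℝ) < Real.Gamma (1+(k:ℝ)/3+l) := Real.Gamma_pos_of_pos (by linarith)
    have Gu : (0:ℝ) < Real.Gamma u := Real.Gamma_pos_of_pos hu0
    -- rewrite the (l+1) Gammas
    have e1 : Real.Gamma ((k:ℝ)/3 + (l+1:ℕ)) = u * Real.Gamma u := by
      push_cast
      rw [show (k:ℝ)/3 + ((l:ℝ)+1) = u + 1 by rw [hu]; ring, Real.Gamma_add_one hu0.ne']
    have e2 : Real.Gamma ((k:ℝ)+3*(l+1:ℕ))
        = (3*u+2) * ((3*u+1) * ((3*u) * Real.Gamma ((k:ℝ)+3*l))) := by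
      push_cast
      have h3u : (k:ℝ) + 3*l = 3*u := by rw [hu]; ring
      rw [show (k:ℝ) + 3*((l:ℝ)+1) = (3*u+2) + 1 by rw [← h3u]; ring,
        Real.Gamma_add_one (by linarith),
        show (3*u+2 : ℝ) = (3*u+1) + 1 by ring,
        Real.Gamma_add_one (by linarith),
        show (3*u+1 : ℝ) = (3*u) + 1 by ring,
        Real.Gamma_add_one (by linarith), h3u]
    have e3 : Real.Gamma (1+(k:ℝ)/3+(l+1:ℕ)) = (1+(k:ℝ)/3+l) * Real.Gamma (1+(k:ℝ)/3+l) := by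
      push_cast
      rw [show 1+(k:ℝ)/3+((l:ℝ)+1) = (1+(k:ℝ)/3+l) + 1 by ring,
        Real.Gamma_add_one (by linarith)]
    rw [S8g_norm t k (l+1) hk, S8g_norm t k l hk,
      e1, e2, e3]
    have hGR : (u * Real.Gamma u)^4 /
        (Real.Gamma ((k:ℝ)/3)^4 * ((3*u+2) * ((3*u+1) * ((3*u) * Real.Gamma ((k:ℝ)+3*l)))) *
          ((1+(k:ℝ)/3+l) * Real.Gamma (1+(k:ℝ)/3+l)))
        ≤ Real.Gamma u^4 / (27 *
          (Real.Gamma ((k:ℝ)/3)^4 * Real.Gamma ((k:ℝ)+3*l) * Real.Gamma (1+(k:ℝ)/3+l))) := by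
      rw [div_le_div_iff₀ (by positivity) (by positivity)]
      have h1kl : 1+(k:ℝ)/3+l = u+1 := by rw [hu]; ring
      have key : 27 * u^4 ≤ (3*u) * (3*u+1) * (3*u+2) * (1+(k:ℝ)/3+l) := by
        rw [h1kl]
        nlinarith [hu0, pow_pos hu0 2, pow_pos hu0 3, pow_pos hu0 4]
      have hp : (0:ℝ) ≤ Real.Gamma u^4 * (Real.Gamma ((k:ℝ)/3)^4 * Real.Gamma ((k:ℝ)+3*l) *
          Real.Gamma (1+(k:ℝ)/3+l)) := by positivity
      have h' := mul_le_mul_of_nonneg_right key hp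
      nlinarith [h']
    calc ‖t‖^(k+3*(l+1)) * ((u * Real.Gamma u)^4 /
            (Real.Gamma ((k:ℝ)/3)^4 * ((3*u+2) * ((3*u+1) * ((3*u) * Real.Gamma ((k:ℝ)+3*l)))) *
              ((1+(k:ℝ)/3+l) * Real.Gamma (1+(k:ℝ)/3+l))))
        ≤ ‖t‖^(k+3*(l+1)) * (Real.Gamma u^4 / (27 *
            (Real.Gamma ((k:ℝ)/3)^4 * Real.Gamma ((k:ℝ)+3*l) * Real.Gamma (1+(k:ℝ)/3+l)))) := by
          apply mul_le_mul_of_nonneg_left hGR (by positivity)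
      _ = ‖t‖^3/27 * (‖t‖^(k+3*l) * (Real.Gamma u^4 /
            (Real.Gamma ((k:ℝ)/3)^4 * Real.Gamma ((k:ℝ)+3*l) * Real.Gamma (1+(k:ℝ)/3+l)))) := by
          rw [show k+3*(l+1) = (k+3*l)+3 by ring, pow_add]
          field_simp

/-- For `h : ℂ` with `e^{-2πih} ≠ e^{2πik/3}` for `k = 0, 1, 2`, and `t : ℂ` with
`|t| < 3`, the series
`Σ_{m≥1} (-1)^m (e^{2πim/3}/(e^{-2πih} - e^{2πim/3})) t^m / (Γ(m) Γ(1-m/3)⁴ Γ(1+m/3))`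
equals
`Σ_{k=1,2} ((-1)^k e^{2πik/3} / ((e^{-2πih} - e^{2πik/3}) Γ(1-k/3)⁴)) ·
  Σ_{l≥0} (-1)^l t^{k+3l} Γ(k/3+l)⁴ / (Γ(k/3)⁴ Γ(k+3l) Γ(1+k/3+l))`,
where all series converge absolutely (terms with `3 ∣ m` vanish since `1/Γ(1-m/3) = 0`). -/
theorem sector_decomposition_cubic_LG_logCY (h t : ℂ)
    (hne : ∀ k : ℕ, k ≤ 2 →
      Complex.exp (-(2 * (Real.pi : ℂ) * Complex.I * h)) ≠
        Complex.exp (2 * (Real.pi : ℂ) * Complex.I * (k : ℂ) / 3))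
    (ht : ‖t‖ < 3) :
    Summable (fun m : ℕ =>
      (-1 : ℂ) ^ (m + 1) *
        (Complex.exp (2 * (Real.pi : ℂ) * Complex.I * ((m : ℂ) + 1) / 3) /
          (Complex.exp (-(2 * (Real.pi : ℂ) * Complex.I * h)) -
            Complex.exp (2 * (Real.pi : ℂ) * Complex.I * ((m : ℂ) + 1) / 3))) *
        t ^ (m + 1) /
        (Complex.Gamma ((m : ℂ) + 1) * Complex.Gamma (1 - ((m : ℂ) + 1) / 3) ^ 4 *
          Complex.Gamma (1 + ((m : ℂ) + 1) / 3))) ∧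
    (∀ k ∈ ({1, 2} : Finset ℕ),
      Summable (fun l : ℕ =>
        (-1 : ℂ) ^ l * t ^ (k + 3 * l) * Complex.Gamma ((k : ℂ) / 3 + (l : ℂ)) ^ 4 /
          (Complex.Gamma ((k : ℂ) / 3) ^ 4 * Complex.Gamma ((k : ℂ) + 3 * (l : ℂ)) *
            Complex.Gamma (1 + (k : ℂ) / 3 + (l : ℂ))))) ∧
    (∑' m : ℕ,
      (-1 : ℂ) ^ (m + 1) *
        (Complex.exp (2 * (Real.pi : ℂ) * Complex.I * ((m : ℂ) + 1) / 3) /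
          (Complex.exp (-(2 * (Real.pi : ℂ) * Complex.I * h)) -
            Complex.exp (2 * (Real.pi : ℂ) * Complex.I * ((m : ℂ) + 1) / 3))) *
        t ^ (m + 1) /
        (Complex.Gamma ((m : ℂ) + 1) * Complex.Gamma (1 - ((m : ℂ) + 1) / 3) ^ 4 *
          Complex.Gamma (1 + ((m : ℂ) + 1) / 3)) =
      ∑ k ∈ ({1, 2} : Finset ℕ),
        ((-1 : ℂ) ^ k * Complex.exp (2 * (Real.pi : ℂ) * Complex.I * (k : ℂ) / 3) /
          ((Complex.exp (-(2 * (Real.pi : ℂ) * Complex.I * h)) -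
              Complex.exp (2 * (Real.pi : ℂ) * Complex.I * (k : ℂ) / 3)) *
            Complex.Gamma (1 - (k : ℂ) / 3) ^ 4)) *
        ∑' l : ℕ,
          (-1 : ℂ) ^ l * t ^ (k + 3 * l) * Complex.Gamma ((k : ℂ) / 3 + (l : ℂ)) ^ 4 /
            (Complex.Gamma ((k : ℂ) / 3) ^ 4 * Complex.Gamma ((k : ℂ) + 3 * (l : ℂ)) *
              Complex.Gamma (1 + (k : ℂ) / 3 + (l : ℂ)))) := by
  have hA1 := hne 1 (by norm_num)
  have hA2 := hne 2 (by norm_num)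
  -- the three residue pieces
  set F1 : ℕ → ℂ := fun m => if m % 3 = 0 then S8F h t m else 0 with hF1def
  set F2 : ℕ → ℂ := fun m => if m % 3 = 1 then S8F h t m else 0 with hF2def
  have hi1 : Function.Injective (fun l : ℕ => 3*l) := fun a b hab => by
    simp only at hab; omega
  have hi2 : Function.Injective (fun l : ℕ => 3*l+1) := fun a b hab => by
    simp only at hab; omega
  have hv1 : ∀ m ∉ Set.range (fun l : ℕ => 3*l), F1 m = 0 := by
    intro m hm
    have : m % 3 ≠ 0 := by
      intro h0
      exact hm ⟨m/3, by simp only; omega⟩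
    simp [hF1def, this]
  have hv2 : ∀ m ∉ Set.range (fun l : ℕ => 3*l+1), F2 m = 0 := by
    intro m hm
    have : m % 3 ≠ 1 := by
      intro h0
      exact hm ⟨m/3, by simp only; omega⟩
    simp [hF2def, this]
  have hcomp1 : (F1 ∘ fun l : ℕ => 3*l) = fun l => S8c h 1 * S8g t 1 l := by
    funext l
    simp only [Function.comp, hF1def, Nat.mul_mod_right, if_pos rfl]
    have := S8_termwise h t 1 l (Or.inl rfl) hA1
    simpa using this
  have hcomp2 : (F2 ∘ fun l : ℕ => 3*l+1) = fun l => S8c h 2 * S8g t 2 l := by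
    funext l
    have hm : (3*l+1) % 3 = 1 := by omega
    simp only [Function.comp, hF2def, hm, if_pos rfl]
    have := S8_termwise h t 2 l (Or.inr rfl) hA2
    simpa using this
  have hsum1 : Summable F1 := by
    rw [← Function.Injective.summable_iff hi1 hv1, hcomp1]
    exact (S8g_summable t ht 1 le_rfl).mul_left _
  have hsum2 : Summable F2 := by
    rw [← Function.Injective.summable_iff hi2 hv2, hcomp2]
    exact (S8g_summable t ht 2 (by norm_num)).mul_left _
  have hFeq : ∀ m, S8F h t m = F1 m + F2 m := by
    intro m
    rcases (by omega : m % 3 = 0 ∨ m % 3 = 1 ∨ m % 3 = 2) with h0 | h0 | h0 <;>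
      simp [hF1def, hF2def, h0, S8F_zero h t m]
  have hsumF : Summable (S8F h t) := by
    have := hsum1.add hsum2
    exact this.congr fun m => (hFeq m).symm
  refine ⟨hsumF, ?_, ?_⟩
  · intro k hk
    fin_cases hk
    · exact S8g_summable t ht 1 le_rfl
    · exact S8g_summable t ht 2 (by norm_num)
  · have ht1 : ∑' m, F1 m = S8c h 1 * ∑' l, S8g t 1 l := by
      rw [← Function.Injective.tsum_eq hi1 (by
        intro m hm
        simp only [Function.support, Set.mem_setOf_eq, ne_eq, not_not] at *
        exact not_imp_comm.mp (fun hr => hv1 m hr) hm)]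
      calc ∑' l, F1 (3*l) = ∑' l, S8c h 1 * S8g t 1 l := by
            refine tsum_congr fun l => ?_
            have := congrFun hcomp1 l
            simpa using this
        _ = S8c h 1 * ∑' l, S8g t 1 l := tsum_mul_left
    have ht2 : ∑' m, F2 m = S8c h 2 * ∑' l, S8g t 2 l := by
      rw [← Function.Injective.tsum_eq hi2 (by
        intro m hm
        simp only [Function.support, Set.mem_setOf_eq, ne_eq, not_not] at *
        exact not_imp_comm.mp (fun hr => hv2 m hr) hm)]
      calc ∑' l, F2 (3*l+1) = ∑' l, S8c h 2 * S8g t 2 l := by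
            refine tsum_congr fun l => ?_
            have := congrFun hcomp2 l
            simpa using this
        _ = S8c h 2 * ∑' l, S8g t 2 l := tsum_mul_left
    calc ∑' m, S8F h t m = ∑' m, (F1 m + F2 m) := tsum_congr hFeq
      _ = ∑' m, F1 m + ∑' m, F2 m := Summable.tsum_add hsum1 hsum2
      _ = S8c h 1 * ∑' l, S8g t 1 l + S8c h 2 * ∑' l, S8g t 2 l := by rw [ht1, ht2]
      _ = ∑ k ∈ ({1, 2} : Finset ℕ), S8c h k * ∑' l, S8g t k l := by
          rw [Finset.sum_insert (by norm_num), Finset.sum_singleton]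
end
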